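/- (Necessity direction of the two-party corollary.) Let W and Z be two-party processes on parties A', B' and A'', B'' respectively such that P = W ⊗ Z is not a valid process for the combined parties A = A'A'', B = B'B''. Then there exist a nonzero nontrivial term of W and a nonzero nontrivial term of Z which are signalling terms of opposite directions; in particular both W and Z contain signalling terms, and the terms of W and Z put together contain signalling terms of both directions. -/

import Mathlib

open Matrix Kronecker BigOperators
open scoped ComplexOrder

namespace ProcessPaper

/-- A (generalized) Hilbert–Schmidt basis of operators on a finite-dimensional Hilbert
space with orthonormal basis indexed by `n`: a family of Hermitian matrices indexed by
`ι` (with `Fintype.card ι = (Fintype.card n) ^ 2`), whose distinguished element `σ 0`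
is the identity, whose other elements are traceless, which are mutually orthogonal
under the trace inner product, and which are all nonzero. -/
def IsHSBasis {n : Type*} [Fintype n] [DecidableEq n] {ι : Type*} [Fintype ι] [Zero ι]
    (σ : ι → Matrix n n ℂ) : Prop :=
  Fintype.card ι = (Fintype.card n) ^ 2 ∧
  (∀ i, (σ i).IsHermitian) ∧
  σ 0 = 1 ∧
  (∀ i, i ≠ 0 → (σ i).trace = 0) ∧
  (∀ i j, i ≠ j → (σ i * σ j).trace = 0) ∧
  (∀ i, σ i ≠ 0)

variable {P : Type*} [Fintype P] [DecidableEq P]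

section defs

variable {I O : P → Type*} [∀ p, Fintype (I p)] [∀ p, DecidableEq (I p)]
  [∀ p, Fintype (O p)] [∀ p, DecidableEq (O p)]
  {ιI ιO : P → Type*} [∀ p, Fintype (ιI p)] [∀ p, Zero (ιI p)]
  [∀ p, Fintype (ιO p)] [∀ p, Zero (ιO p)]

/-- The tensor product, over all parties, of party-local operators
(each party `p` carries the Hilbert space of its input system `I p`
tensored with its output system `O p`). -/
def tensorFamily (M : ∀ p, Matrix (I p × O p) (I p × O p) ℂ) :
    Matrix ((p : P) → I p × O p) ((p : P) → I p × O p) ℂ :=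
  fun x y => ∏ p, M p (x p) (y p)

/-- The Hilbert–Schmidt basis term with multi-index `t`:
`⨂_p σI p (t p).1 ⊗ σO p (t p).2`. -/
def hsTerm (σI : ∀ p, ιI p → Matrix (I p) (I p) ℂ)
    (σO : ∀ p, ιO p → Matrix (O p) (O p) ℂ)
    (t : ∀ p, ιI p × ιO p) :
    Matrix ((p : P) → I p × O p) ((p : P) → I p × O p) ℂ :=
  fun x y => ∏ p, σI p (t p).1 (x p).1 (y p).1 * σO p (t p).2 (x p).2 (y p).2

/-- The operator with Hilbert–Schmidt coefficients `w`. -/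
noncomputable def expand (σI : ∀ p, ιI p → Matrix (I p) (I p) ℂ)
    (σO : ∀ p, ιO p → Matrix (O p) (O p) ℂ)
    (w : (∀ p, ιI p × ιO p) → ℝ) :
    Matrix ((p : P) → I p × O p) ((p : P) → I p × O p) ℂ :=
  ∑ t : ∀ p, ιI p × ιO p, (w t : ℂ) • hsTerm σI σO t

end defs

section types

variable {ιI ιO : P → Type*} [∀ p, Zero (ιI p)] [∀ p, Zero (ιO p)]

/-- A term is trivial on party `p` if its indices on both the input and the output
system of `p` are zero (identity factor on party `p`). -/
def TrivialAt (t : ∀ p, ιI p × ιO p) (p : P) : Prop :=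
  (t p).1 = 0 ∧ (t p).2 = 0

/-- A term is in type on party `p` if it is nontrivial on the input system of `p`
and trivial (identity) on the output system of `p`. -/
def InTypeAt (t : ∀ p, ιI p × ιO p) (p : P) : Prop :=
  (t p).1 ≠ 0 ∧ (t p).2 = 0

/-- A term includes the out type on party `p` if it is nontrivial on the output
system of `p`. -/
def IncludesOutAt (t : ∀ p, ιI p × ιO p) (p : P) : Prop :=
  (t p).2 ≠ 0

/-- A term is nontrivial if it is nontrivial on some party
(i.e. it is not the identity term). -/
def NontrivialTerm (t : ∀ p, ιI p × ιO p) : Prop :=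
  ∃ p, ¬ TrivialAt t p

/-- The Oreshkov–Giarmatzi condition on Hilbert–Schmidt coefficients: every nonzero
nontrivial term is in type on at least one party. -/
def OGCoeffs (w : (∀ p, ιI p × ιO p) → ℝ) : Prop :=
  ∀ t, w t ≠ 0 → NontrivialTerm t → ∃ p, InTypeAt t p

end types

section process

variable {I O : P → Type*} [∀ p, Fintype (I p)] [∀ p, DecidableEq (I p)]
  [∀ p, Fintype (O p)] [∀ p, DecidableEq (O p)]
  {ιI ιO : P → Type*} [∀ p, Fintype (ιI p)] [∀ p, Zero (ιI p)]
  [∀ p, Fintype (ιO p)] [∀ p, Zero (ιO p)]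

/-- `W` is a valid process with Hilbert–Schmidt coefficients `w` (relative to the
Hilbert–Schmidt bases `σI`, `σO`): it is positive semidefinite, has trace equal to the
product `d_O` of the output dimensions, has expansion given by `w`, and every nonzero
nontrivial Hilbert–Schmidt term of it is in type on at least one party. -/
def IsProcessWith (σI : ∀ p, ιI p → Matrix (I p) (I p) ℂ)
    (σO : ∀ p, ιO p → Matrix (O p) (O p) ℂ)
    (W : Matrix ((p : P) → I p × O p) ((p : P) → I p × O p) ℂ)
    (w : (∀ p, ιI p × ιO p) → ℝ) : Prop :=
  W.PosSemidef ∧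
  W.trace = ∏ p, (Fintype.card (O p) : ℂ) ∧
  W = expand σI σO w ∧
  OGCoeffs w

/-- `W` is a valid process (relative to the Hilbert–Schmidt bases `σI`, `σO`). -/
def IsProcess (σI : ∀ p, ιI p → Matrix (I p) (I p) ℂ)
    (σO : ∀ p, ιO p → Matrix (O p) (O p) ℂ)
    (W : Matrix ((p : P) → I p × O p) ((p : P) → I p × O p) ℂ) : Prop :=
  ∃ w, IsProcessWith σI σO W w

end process

section product

variable {I' O' I'' O'' : P → Type*}

/-- The tensor product `P = W ⊗ Z` of an operator `W` for parties `A', B', …` and an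
operator `Z` for parties `A'', B'', …`, regarded as an operator for the combined
parties `A = A'A''` (input `a₁ = a₁'a₁''`, output `a₂ = a₂'a₂''`), `B = B'B''`, …. -/
def prodOp (W : Matrix ((p : P) → I' p × O' p) ((p : P) → I' p × O' p) ℂ)
    (Z : Matrix ((p : P) → I'' p × O'' p) ((p : P) → I'' p × O'' p) ℂ) :
    Matrix ((p : P) → (I' p × I'' p) × (O' p × O'' p))
      ((p : P) → (I' p × I'' p) × (O' p × O'' p)) ℂ :=
  fun x y =>
    W (fun p => ((x p).1.1, (x p).2.1)) (fun p => ((y p).1.1, (y p).2.1)) *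
    Z (fun p => ((x p).1.2, (x p).2.2)) (fun p => ((y p).1.2, (y p).2.2))

end product

/-- The Hilbert–Schmidt basis of a combined system, consisting of the tensor (Kronecker)
products of the basis elements of the two subsystems; its distinguished (identity)
element is the product of the two distinguished elements. -/
def prodBasis {n n' ι ι' : Type*} (σ : ι → Matrix n n ℂ) (σ' : ι' → Matrix n' n' ℂ) :
    ι × ι' → Matrix (n × n') (n × n') ℂ :=
  fun i => σ i.1 ⊗ₖ σ' i.2

section coeffs

variable {ιI' ιO' ιI'' ιO'' : P → Type*}

/-- The Hilbert–Schmidt coefficients of a tensor product `W ⊗ Z` in terms of the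
coefficients `w` of `W` and `z` of `Z`. -/
def prodCoeffs (w : (∀ p, ιI' p × ιO' p) → ℝ) (z : (∀ p, ιI'' p × ιO'' p) → ℝ) :
    (∀ p, (ιI' p × ιI'' p) × (ιO' p × ιO'' p)) → ℝ :=
  fun u => w (fun p => ((u p).1.1, (u p).2.1)) * z (fun p => ((u p).1.2, (u p).2.2))

/-- The multi-index of the tensor product of the term `t` of `W` and the term `s`
of `Z`, as a term for the combined parties. -/
def combineTerm (t : ∀ p, ιI' p × ιO' p) (s : ∀ p, ιI'' p × ιO'' p) :
    ∀ p, (ιI' p × ιI'' p) × (ιO' p × ιO'' p) :=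
  fun p => (((t p).1, (s p).1), ((t p).2, (s p).2))

end coeffs

section twoparty

variable {ιI ιO : Fin 2 → Type*} [∀ p, Zero (ιI p)] [∀ p, Zero (ιO p)]

/-- For two parties `A` (party `0`) and `B` (party `1`), an `A` to `B` signalling
term: a term of type `a₂b₁` or `a₁a₂b₁`, i.e. nontrivial on `a₂` and on `b₁` and
trivial on `b₂`. -/
def AtoBSig (t : ∀ p, ιI p × ιO p) : Prop :=
  (t 0).2 ≠ 0 ∧ (t 1).1 ≠ 0 ∧ (t 1).2 = 0

/-- A `B` to `A` signalling term: a term of type `a₁b₂` or `a₁b₁b₂`, i.e. nontrivial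
on `b₂` and on `a₁` and trivial on `a₂`. -/
def BtoASig (t : ∀ p, ιI p × ιO p) : Prop :=
  (t 1).2 ≠ 0 ∧ (t 0).1 ≠ 0 ∧ (t 0).2 = 0

end twoparty



section prodlemmas

variable {I' O' I'' O'' : P → Type*}
  [∀ p, Fintype (I' p)] [∀ p, DecidableEq (I' p)]
  [∀ p, Fintype (O' p)] [∀ p, DecidableEq (O' p)]
  [∀ p, Fintype (I'' p)] [∀ p, DecidableEq (I'' p)]
  [∀ p, Fintype (O'' p)] [∀ p, DecidableEq (O'' p)]

/-- The equivalence splitting a combined-party configuration into primed and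
double-primed configurations. -/
def splitEquiv {α β γ δ : P → Type*} :
    ((p : P) → (α p × β p) × (γ p × δ p)) ≃ ((∀ p, α p × γ p) × (∀ p, β p × δ p)) where
  toFun x := (fun p => ((x p).1.1, (x p).2.1), fun p => ((x p).1.2, (x p).2.2))
  invFun y := fun p => (((y.1 p).1, (y.2 p).1), ((y.1 p).2, (y.2 p).2))
  left_inv x := by funext p; simp
  right_inv y := by ext p <;> simp

lemma prodOp_posSemidef
    {W : Matrix ((p : P) → I' p × O' p) ((p : P) → I' p × O' p) ℂ}
    {Z : Matrix ((p : P) → I'' p × O'' p) ((p : P) → I'' p × O'' p) ℂ}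
    (hW : W.PosSemidef) (hZ : Z.PosSemidef) : (prodOp W Z).PosSemidef := by
  obtain ⟨A, rfl⟩ : ∃ A : Matrix _ _ ℂ, W = Aᴴ * A := by
    open scoped MatrixOrder Matrix.Norms.L2Operator in
      exact CStarAlgebra.nonneg_iff_eq_star_mul_self.mp hW.nonneg
  obtain ⟨B, rfl⟩ : ∃ B : Matrix _ _ ℂ, Z = Bᴴ * B := by
    open scoped MatrixOrder Matrix.Norms.L2Operator in
      exact CStarAlgebra.nonneg_iff_eq_star_mul_self.mp hZ.nonneg
  set C : Matrix ((∀ p, I' p × O' p) × (∀ p, I'' p × O'' p))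
      ((p : P) → (I' p × I'' p) × (O' p × O'' p)) ℂ :=
    fun i x => A i.1 (fun p => ((x p).1.1, (x p).2.1)) *
      B i.2 (fun p => ((x p).1.2, (x p).2.2)) with hC
  have h : prodOp (Aᴴ * A) (Bᴴ * B) = Cᴴ * C := by
    ext x y
    simp only [prodOp, Matrix.mul_apply, Matrix.conjTranspose_apply]
    simp only [hC, Fintype.sum_prod_type, Finset.sum_mul_sum]
    refine Finset.sum_congr rfl fun k _ => Finset.sum_congr rfl fun l _ => ?_
    simp only [star_mul']
    ring
  rw [h]
  exact Matrix.posSemidef_conjTranspose_mul_self C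

lemma prodOp_trace
    (W : Matrix ((p : P) → I' p × O' p) ((p : P) → I' p × O' p) ℂ)
    (Z : Matrix ((p : P) → I'' p × O'' p) ((p : P) → I'' p × O'' p) ℂ) :
    (prodOp W Z).trace = W.trace * Z.trace := by
  simp only [Matrix.trace, Matrix.diag, prodOp]
  have h := Fintype.sum_equiv (splitEquiv (α := I') (β := I'') (γ := O') (δ := O''))
    (fun x => (W (fun p => ((x p).1.1, (x p).2.1)) fun p => ((x p).1.1, (x p).2.1)) *
        Z (fun p => ((x p).1.2, (x p).2.2)) fun p => ((x p).1.2, (x p).2.2))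
    (fun y => W y.1 y.1 * Z y.2 y.2) (fun x => rfl)
  rw [h, Fintype.sum_prod_type]
  simp only [Finset.sum_mul, Finset.mul_sum]
  rw [Finset.sum_comm]

variable {ιI' ιO' ιI'' ιO'' : P → Type*}
  [∀ p, Fintype (ιI' p)] [∀ p, Fintype (ιO' p)]
  [∀ p, Fintype (ιI'' p)] [∀ p, Fintype (ιO'' p)]
  [∀ p, Zero (ιI' p)] [∀ p, Zero (ιO' p)]
  [∀ p, Zero (ιI'' p)] [∀ p, Zero (ιO'' p)]

lemma prodOp_expand
    (σI' : ∀ p, ιI' p → Matrix (I' p) (I' p) ℂ)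
    (σO' : ∀ p, ιO' p → Matrix (O' p) (O' p) ℂ)
    (σI'' : ∀ p, ιI'' p → Matrix (I'' p) (I'' p) ℂ)
    (σO'' : ∀ p, ιO'' p → Matrix (O'' p) (O'' p) ℂ)
    (w : (∀ p, ιI' p × ιO' p) → ℝ) (z : (∀ p, ιI'' p × ιO'' p) → ℝ) :
    prodOp (expand σI' σO' w) (expand σI'' σO'' z) =
      expand (fun p => prodBasis (σI' p) (σI'' p)) (fun p => prodBasis (σO' p) (σO'' p))
        (prodCoeffs w z) := by
  ext x y
  simp only [expand, prodOp, Matrix.sum_apply, Matrix.smul_apply, smul_eq_mul]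
  have h := Fintype.sum_equiv (splitEquiv (α := ιI') (β := ιI'') (γ := ιO') (δ := ιO''))
    (fun u => ((prodCoeffs w z u : ℝ) : ℂ) *
      hsTerm (fun p => prodBasis (σI' p) (σI'' p)) (fun p => prodBasis (σO' p) (σO'' p)) u x y)
    (fun ts => ((w ts.1 : ℝ) : ℂ) * ((z ts.2 : ℝ) : ℂ) *
      (hsTerm σI' σO' ts.1 (fun p => ((x p).1.1, (x p).2.1)) (fun p => ((y p).1.1, (y p).2.1)) *
       hsTerm σI'' σO'' ts.2 (fun p => ((x p).1.2, (x p).2.2)) (fun p => ((y p).1.2, (y p).2.2))))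
    (fun u => ?_)
  · rw [h, Fintype.sum_prod_type, Finset.sum_mul_sum]
    refine Finset.sum_congr rfl fun t _ => Finset.sum_congr rfl fun s _ => ?_
    ring
  · have hprod : hsTerm (fun p => prodBasis (σI' p) (σI'' p))
        (fun p => prodBasis (σO' p) (σO'' p)) u x y =
        hsTerm σI' σO' (fun p => ((u p).1.1, (u p).2.1))
            (fun p => ((x p).1.1, (x p).2.1)) (fun p => ((y p).1.1, (y p).2.1)) *
        hsTerm σI'' σO'' (fun p => ((u p).1.2, (u p).2.2))
            (fun p => ((x p).1.2, (x p).2.2)) (fun p => ((y p).1.2, (y p).2.2)) := by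
      simp only [hsTerm, prodBasis, Matrix.kroneckerMap_apply, ← Finset.prod_mul_distrib]
      refine Finset.prod_congr rfl fun p _ => ?_
      ring
    simp only [prodCoeffs, Complex.ofReal_mul, hprod]
    rfl

end prodlemmas


variable {I' O' I'' O'' : Fin 2 → Type*}
  [∀ p, Fintype (I' p)] [∀ p, DecidableEq (I' p)]
  [∀ p, Fintype (O' p)] [∀ p, DecidableEq (O' p)]
  [∀ p, Fintype (I'' p)] [∀ p, DecidableEq (I'' p)]
  [∀ p, Fintype (O'' p)] [∀ p, DecidableEq (O'' p)]
  {ιI' ιO' ιI'' ιO'' : Fin 2 → Type*}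
  [∀ p, Fintype (ιI' p)] [∀ p, Zero (ιI' p)]
  [∀ p, Fintype (ιO' p)] [∀ p, Zero (ιO' p)]
  [∀ p, Fintype (ιI'' p)] [∀ p, Zero (ιI'' p)]
  [∀ p, Fintype (ιO'' p)] [∀ p, Zero (ιO'' p)]

section Statement7

/-- **Necessity direction of the two-party corollary.** Let `W` and `Z` be two-party
processes on parties `A', B'` and `A'', B''` respectively (with Hilbert–Schmidt
coefficients `w`, `z`; party `0` is the `A`-type party and party `1` the `B`-type
party) such that `P = W ⊗ Z` is not a valid process for the combined parties
`A = A'A''`, `B = B'B''`. Then there exist a nonzero nontrivial term of `W` and a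
nonzero nontrivial term of `Z` which are signalling terms of opposite directions; in
particular both `W` and `Z` contain signalling terms, and the terms of `W` and `Z`
put together contain signalling terms of both directions. -/
theorem statement7
    (σI' : ∀ p, ιI' p → Matrix (I' p) (I' p) ℂ)
    (σO' : ∀ p, ιO' p → Matrix (O' p) (O' p) ℂ)
    (σI'' : ∀ p, ιI'' p → Matrix (I'' p) (I'' p) ℂ)
    (σO'' : ∀ p, ιO'' p → Matrix (O'' p) (O'' p) ℂ)
    (hσI' : ∀ p, IsHSBasis (σI' p)) (hσO' : ∀ p, IsHSBasis (σO' p))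
    (hσI'' : ∀ p, IsHSBasis (σI'' p)) (hσO'' : ∀ p, IsHSBasis (σO'' p))
    (W : Matrix ((p : Fin 2) → I' p × O' p) ((p : Fin 2) → I' p × O' p) ℂ)
    (Z : Matrix ((p : Fin 2) → I'' p × O'' p) ((p : Fin 2) → I'' p × O'' p) ℂ)
    (w : (∀ p, ιI' p × ιO' p) → ℝ) (z : (∀ p, ιI'' p × ιO'' p) → ℝ)
    (hW : IsProcessWith σI' σO' W w) (hZ : IsProcessWith σI'' σO'' Z z)
    (hnot : ¬ IsProcess (fun p => prodBasis (σI' p) (σI'' p))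
        (fun p => prodBasis (σO' p) (σO'' p)) (prodOp W Z)) :
    (∃ (t : ∀ p, ιI' p × ιO' p) (s : ∀ p, ιI'' p × ιO'' p),
        w t ≠ 0 ∧ z s ≠ 0 ∧ NontrivialTerm t ∧ NontrivialTerm s ∧
        ((AtoBSig t ∧ BtoASig s) ∨ (BtoASig t ∧ AtoBSig s))) ∧
    (∃ t, w t ≠ 0 ∧ (AtoBSig t ∨ BtoASig t)) ∧
    (∃ s, z s ≠ 0 ∧ (AtoBSig s ∨ BtoASig s)) ∧
    ((∃ t, w t ≠ 0 ∧ AtoBSig t) ∨ (∃ s, z s ≠ 0 ∧ AtoBSig s)) ∧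
    ((∃ t, w t ≠ 0 ∧ BtoASig t) ∨ (∃ s, z s ≠ 0 ∧ BtoASig s)) := by
  classical
  have hps : (prodOp W Z).PosSemidef := prodOp_posSemidef hW.1 hZ.1
  have htr : (prodOp W Z).trace = ∏ p : Fin 2, (Fintype.card (O' p × O'' p) : ℂ) := by
    rw [prodOp_trace, hW.2.1, hZ.2.1, ← Finset.prod_mul_distrib]
    simp [Fintype.card_prod]
  have hexp : prodOp W Z = expand (fun p => prodBasis (σI' p) (σI'' p))
      (fun p => prodBasis (σO' p) (σO'' p)) (prodCoeffs w z) := by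
    rw [hW.2.2.1, hZ.2.2.1]
    exact prodOp_expand σI' σO' σI'' σO'' w z
  have hOG : ¬ OGCoeffs (prodCoeffs w z) := fun h =>
    hnot ⟨prodCoeffs w z, hps, htr, hexp, h⟩
  simp only [OGCoeffs] at hOG
  push_neg at hOG
  obtain ⟨u, hu0, hunt, hano⟩ := hOG
  have hu0' : w (fun p => ((u p).1.1, (u p).2.1)) * z (fun p => ((u p).1.2, (u p).2.2)) ≠ 0 := hu0
  have hw0 : w (fun p => ((u p).1.1, (u p).2.1)) ≠ 0 := left_ne_zero_of_mul hu0'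
  have hz0 : z (fun p => ((u p).1.2, (u p).2.2)) ≠ 0 := right_ne_zero_of_mul hu0'
  -- key fact: no party of `u` can be in type
  have hkey : ∀ p : Fin 2, (u p).2.1 = 0 → (u p).2.2 = 0 →
      ((u p).1.1 ≠ 0 ∨ (u p).1.2 ≠ 0) → False := by
    intro p h2 h3 h1
    refine hano p ⟨?_, ?_⟩
    · intro h0
      have e1 : (u p).1.1 = 0 := by rw [h0]; rfl
      have e2 : (u p).1.2 = 0 := by rw [h0]; rfl
      rcases h1 with h | h
      exacts [h e1, h e2]
    · have he : (u p).2 = ((u p).2.1, (u p).2.2) := rfl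
      rw [he, h2, h3]; rfl
  -- nontriviality of the first factor term
  have hntT : NontrivialTerm (fun p => ((u p).1.1, (u p).2.1) : ∀ p, ιI' p × ιO' p) := by
    by_contra hc
    simp only [NontrivialTerm, TrivialAt, not_exists, not_not] at hc
    have hntS : NontrivialTerm (fun p => ((u p).1.2, (u p).2.2) : ∀ p, ιI'' p × ιO'' p) := by
      obtain ⟨p, hp⟩ := hunt
      refine ⟨p, fun hsp => hp ⟨?_, ?_⟩⟩
      · have e : (u p).1 = ((u p).1.1, (u p).1.2) := rfl
        have hs1 : (u p).1.2 = 0 := hsp.1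
        rw [e, (hc p).1, hs1]; rfl
      · have e : (u p).2 = ((u p).2.1, (u p).2.2) := rfl
        have hs2 : (u p).2.2 = 0 := hsp.2
        rw [e, (hc p).2, hs2]; rfl
    obtain ⟨p, hp1, hp2⟩ := hZ.2.2.2 _ hz0 hntS
    exact hkey p (hc p).2 hp2 (Or.inr hp1)
  have hntS : NontrivialTerm (fun p => ((u p).1.2, (u p).2.2) : ∀ p, ιI'' p × ιO'' p) := by
    by_contra hc
    simp only [NontrivialTerm, TrivialAt, not_exists, not_not] at hc
    obtain ⟨p, hp1, hp2⟩ := hW.2.2.2 _ hw0 hntT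
    exact hkey p hp2 (hc p).2 (Or.inl hp1)
  obtain ⟨pt, hIt⟩ := hW.2.2.2 _ hw0 hntT
  obtain ⟨ps, hIs⟩ := hZ.2.2.2 _ hz0 hntS
  have hne : pt ≠ ps := by
    intro h; subst h
    exact hkey pt hIt.2 hIs.2 (Or.inl hIt.1)
  have hmain : ∃ (t : ∀ p, ιI' p × ιO' p) (s : ∀ p, ιI'' p × ιO'' p),
      w t ≠ 0 ∧ z s ≠ 0 ∧ NontrivialTerm t ∧ NontrivialTerm s ∧
      ((AtoBSig t ∧ BtoASig s) ∨ (BtoASig t ∧ AtoBSig s)) := by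
    refine ⟨_, _, hw0, hz0, hntT, hntS, ?_⟩
    have hpt : pt = 0 ∨ pt = 1 := by omega
    have hps' : ps = 0 ∨ ps = 1 := by omega
    rcases hpt with rfl | rfl <;> rcases hps' with rfl | rfl
    · exact absurd rfl hne
    · -- t in type at A (0), s in type at B (1) : t is BtoA, s is AtoB
      have h1 : (u 1).2.1 ≠ 0 := fun h => hkey 1 h hIs.2 (Or.inr hIs.1)
      have h2 : (u 0).2.2 ≠ 0 := fun h => hkey 0 hIt.2 h (Or.inl hIt.1)
      exact Or.inr ⟨⟨h1, hIt.1, hIt.2⟩, ⟨h2, hIs.1, hIs.2⟩⟩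
    · -- t in type at B (1), s in type at A (0) : t is AtoB, s is BtoA
      have h1 : (u 0).2.1 ≠ 0 := fun h => hkey 0 h hIs.2 (Or.inr hIs.1)
      have h2 : (u 1).2.2 ≠ 0 := fun h => hkey 1 hIt.2 h (Or.inl hIt.1)
      exact Or.inl ⟨⟨h1, hIt.1, hIt.2⟩, ⟨h2, hIs.1, hIs.2⟩⟩
    · exact absurd rfl hne
  obtain ⟨t, s, hw0', hz0', hnt, hns, hsig⟩ := hmain
  refine ⟨⟨t, s, hw0', hz0', hnt, hns, hsig⟩, ?_, ?_, ?_, ?_⟩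
  · exact ⟨t, hw0', hsig.elim (fun h => Or.inl h.1) (fun h => Or.inr h.1)⟩
  · exact ⟨s, hz0', hsig.elim (fun h => Or.inr h.2) (fun h => Or.inl h.2)⟩
  · exact hsig.elim (fun h => Or.inl ⟨t, hw0', h.1⟩) (fun h => Or.inr ⟨s, hz0', h.2⟩)
  · exact hsig.elim (fun h => Or.inr ⟨s, hz0', h.2⟩) (fun h => Or.inl ⟨t, hw0', h.1⟩)


end Statement7

end ProcessPaper
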